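/- For every c ∈ (1, 2], it holds that p₁(c) − p₂ > 5(c−1)/21, where p₁(c) = erf(c/√2) − √(2/π)·(1/c)·(1 − exp(−c²/2)) and p₂ = erf(1/√2) − √(2/π)·(1 − exp(−1/2)). -/

import Mathlib

open Real

/-- The Gauss error function: erf(x) = (2/√π)·∫₀^x exp(−t²) dt. -/
noncomputable def erf (x : ℝ) : ℝ :=
  (2 / Real.sqrt π) * ∫ t in (0:ℝ)..x, Real.exp (-t ^ 2)



noncomputable def f (x : ℝ) : ℝ :=
  erf (x / Real.sqrt 2) - Real.sqrt (2 / π) * (1 / x) * (1 - Real.exp (-x ^ 2 / 2))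

noncomputable def g (x : ℝ) : ℝ := Real.sqrt (2 / π) * (1 - Real.exp (-x ^ 2 / 2)) / x ^ 2

lemma sqrt2_pos : (0:ℝ) < Real.sqrt 2 := Real.sqrt_pos.2 (by norm_num)

lemma key : 2 / Real.sqrt π = Real.sqrt (2 / π) * Real.sqrt 2 := by
  rw [show (2:ℝ)/π = 2 * π⁻¹ by ring, Real.sqrt_mul (by norm_num), Real.sqrt_inv]
  have hπ : (0:ℝ) < Real.sqrt π := Real.sqrt_pos.2 Real.pi_pos
  have h2 : Real.sqrt 2 * Real.sqrt 2 = 2 := Real.mul_self_sqrt (by norm_num)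
  field_simp
  linear_combination -h2

lemma hasDerivAt_f (x : ℝ) (hx : 0 < x) : HasDerivAt f (g x) x := by
  have hG : HasDerivAt (fun u : ℝ => ∫ t in (0:ℝ)..u, Real.exp (-t^2))
      (Real.exp (-(x / Real.sqrt 2)^2)) (x / Real.sqrt 2) :=
    (Continuous.integral_hasStrictDerivAt (by continuity) 0 (x / Real.sqrt 2)).hasDerivAt
  have hinner : HasDerivAt (fun x : ℝ => x / Real.sqrt 2) (Real.sqrt 2)⁻¹ x := by
    simpa using (hasDerivAt_id x).div_const (Real.sqrt 2)
  have h1 : HasDerivAt (fun x : ℝ => erf (x / Real.sqrt 2))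
      (2 / Real.sqrt π * (Real.exp (-(x / Real.sqrt 2)^2) * (Real.sqrt 2)⁻¹)) x := by
    unfold erf
    exact (hG.comp x hinner).const_mul _
  have hsq : (x / Real.sqrt 2)^2 = x^2/2 := by
    rw [div_pow, Real.sq_sqrt (by norm_num : (0:ℝ) ≤ 2)]
  have h1' : HasDerivAt (fun x : ℝ => erf (x / Real.sqrt 2))
      (Real.sqrt (2/π) * Real.exp (-x^2/2)) x := by
    convert h1 using 1
    rw [hsq, key]
    have h2 : Real.sqrt 2 * (Real.sqrt 2)⁻¹ = 1 := mul_inv_cancel₀ sqrt2_pos.ne'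
    rw [← neg_div]
    linear_combination (-(Real.sqrt (2/π) * Real.exp (-x^2/2))) * h2
  have hexp : HasDerivAt (fun x : ℝ => 1 - Real.exp (-x^2/2)) (x * Real.exp (-x^2/2)) x := by
    have h : HasDerivAt (fun x : ℝ => -x^2/2) (-x) x := by
      have := ((hasDerivAt_pow 2 x).neg).div_const 2
      simpa using this.congr_deriv (by push_cast; ring)
    simpa using (h.exp.const_sub 1).congr_deriv (by ring)
  have hinv : HasDerivAt (fun x : ℝ => 1/x) (-(x^2)⁻¹) x := by
    simpa using (hasDerivAt_inv hx.ne').congr_deriv (by simp [one_div])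
  have h2 : HasDerivAt (fun x : ℝ => Real.sqrt (2/π) * (1/x) * (1 - Real.exp (-x^2/2)))
      (Real.sqrt (2/π) * ((-(x^2)⁻¹) * (1 - Real.exp (-x^2/2)) + (1/x) * (x * Real.exp (-x^2/2)))) x := by
    have := (hinv.mul hexp).const_mul (Real.sqrt (2/π))
    convert this using 1
    any_goals rfl
    ext y; simp only [Pi.mul_apply]; ring
  have h3 := h1'.sub h2
  unfold f g
  convert h3 using 1
  any_goals rfl
  field_simp
  ring




lemma hasDerivAt_g (x : ℝ) (hx : 0 < x) : HasDerivAt g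
    ((Real.sqrt (2/π) * (x * Real.exp (-x^2/2)) * x^2
      - Real.sqrt (2/π) * (1 - Real.exp (-x^2/2)) * (2*x)) / (x^2)^2) x := by
  have hexp : HasDerivAt (fun x : ℝ => 1 - Real.exp (-x^2/2)) (x * Real.exp (-x^2/2)) x := by
    have h : HasDerivAt (fun x : ℝ => -x^2/2) (-x) x := by
      have := ((hasDerivAt_pow 2 x).neg).div_const 2
      simpa using this.congr_deriv (by push_cast; ring)
    simpa using (h.exp.const_sub 1).congr_deriv (by ring)
  have hN : HasDerivAt (fun x : ℝ => Real.sqrt (2/π) * (1 - Real.exp (-x^2/2)))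
      (Real.sqrt (2/π) * (x * Real.exp (-x^2/2))) x := hexp.const_mul _
  have hD : HasDerivAt (fun x : ℝ => x^2) (2*x) x := by
    simpa using (hasDerivAt_pow 2 x).congr_deriv (by push_cast; ring)
  exact hN.div hD (by positivity)

lemma deriv2_g_neg (x : ℝ) (hx : 0 < x) : deriv g x < 0 := by
  rw [(hasDerivAt_g x hx).deriv]
  have hs : (0:ℝ) < Real.sqrt (2/π) := Real.sqrt_pos.2 (by positivity)
  have he : Real.exp (-x^2/2) * Real.exp (x^2/2) = 1 := by
    rw [← Real.exp_add, show -x^2/2 + x^2/2 = 0 by ring, Real.exp_zero]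
  have hlt : x^2/2 + 1 < Real.exp (x^2/2) := by
    have := Real.add_one_lt_exp (x := x^2/2) (by positivity)
    linarith
  have hnum : Real.sqrt (2/π) * (x * Real.exp (-x^2/2)) * x^2
      - Real.sqrt (2/π) * (1 - Real.exp (-x^2/2)) * (2*x) < 0 := by
    have hepos := Real.exp_pos (-x^2/2)
    have h1 := mul_lt_mul_of_pos_left hlt hepos
    rw [he] at h1
    have h0 : x^2 * Real.exp (-x^2/2) + 2 * Real.exp (-x^2/2) - 2 < 0 := by nlinarith
    nlinarith [mul_pos hs hx]
  exact div_neg_of_neg_of_pos hnum (by positivity)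


noncomputable def P (t : ℝ) : ℝ := Real.exp (-1) * (11729/4320 - 1943/720*t^2 + 377/288*t^4
  - 83/216*t^6 + 17/288*t^8 + 1/720*t^10 - 7/4320*t^12)

noncomputable def F (t : ℝ) : ℝ := Real.exp (-1) * (11729/4320*t - 1943/2160*t^3 + 377/1440*t^5
  - 83/1512*t^7 + 17/2592*t^9 + 1/7920*t^11 - 7/56160*t^13)

lemma P_le (t : ℝ) (h1 : 1/2 ≤ t^2) (h2 : t^2 ≤ 2) : P t ≤ Real.exp (-t^2) := by
  set y : ℝ := 1 - t^2 with hy_def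
  have hy : |y| ≤ 1 := abs_le.2 ⟨by simp only [hy_def]; linarith, by simp only [hy_def]; linarith⟩
  have hb := Real.exp_bound hy (n := 6) (by norm_num)
  have hsum : ∑ m ∈ Finset.range 6, y^m / (Nat.factorial m) =
      1 + y + y^2/2 + y^3/6 + y^4/24 + y^5/120 := by
    simp [Finset.sum_range_succ, Nat.factorial]
  rw [hsum] at hb
  have habs : |y|^6 = y^6 := by
    rw [← abs_pow, abs_of_nonneg (by positivity)]
  rw [habs] at hb
  have hlow : 1 + y + y^2/2 + y^3/6 + y^4/24 + y^5/120 - y^6 * (7/4320) ≤ Real.exp y := by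
    have := (abs_sub_le_iff.1 hb).2
    have h7 : ((Nat.succ 6 : ℕ) : ℝ) / ((Nat.factorial 6 : ℕ) * (6:ℕ)) = 7/4320 := by
      norm_num [Nat.factorial]
    rw [h7] at this
    linarith
  have hexp : Real.exp (-t^2) = Real.exp (-1) * Real.exp y := by
    rw [← Real.exp_add]; congr 1; simp only [hy_def]; ring
  rw [hexp]
  have := mul_le_mul_of_nonneg_left hlow (le_of_lt (Real.exp_pos (-1)))
  refine le_trans (le_of_eq ?_) this
  simp only [hy_def, P]
  ring

lemma hasDerivAt_F (t : ℝ) : HasDerivAt F (P t) t := by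
  have h : HasDerivAt (fun t : ℝ => 11729/4320*t - 1943/2160*t^3 + 377/1440*t^5
      - 83/1512*t^7 + 17/2592*t^9 + 1/7920*t^11 - 7/56160*t^13)
      (11729/4320 - 1943/720*t^2 + 377/288*t^4
        - 83/216*t^6 + 17/288*t^8 + 1/720*t^10 - 7/4320*t^12) t := by
    have h1 := (hasDerivAt_id t).const_mul (11729/4320 : ℝ)
    have h3 := (hasDerivAt_pow 3 t).const_mul (1943/2160 : ℝ)
    have h5 := (hasDerivAt_pow 5 t).const_mul (377/1440 : ℝ)
    have h7 := (hasDerivAt_pow 7 t).const_mul (83/1512 : ℝ)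
    have h9 := (hasDerivAt_pow 9 t).const_mul (17/2592 : ℝ)
    have h11 := (hasDerivAt_pow 11 t).const_mul (1/7920 : ℝ)
    have h13 := (hasDerivAt_pow 13 t).const_mul (7/56160 : ℝ)
    have := ((((((h1.sub h3).add h5).sub h7).add h9).add h11).sub h13)
    convert this using 1
    any_goals rfl
    push_cast
    ring
  exact (h.const_mul (Real.exp (-1))).congr_deriv (by unfold P; ring)

lemma integral_P : ∫ t in (1/Real.sqrt 2 : ℝ)..(Real.sqrt 2), P t
    = Real.exp (-1) * (768668129/1660538880) * Real.sqrt 2 := by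
  rw [intervalIntegral.integral_eq_sub_of_hasDerivAt (fun x _ => hasDerivAt_F x)
    (Continuous.intervalIntegrable (by unfold P; continuity) _ _)]
  have hs : Real.sqrt 2 ^ 2 = 2 := Real.sq_sqrt (by norm_num)
  have hne : Real.sqrt 2 ≠ 0 := by positivity
  have hinv : (1 : ℝ)/Real.sqrt 2 = Real.sqrt 2 / 2 := by
    rw [div_eq_div_iff (by positivity) (by norm_num : (2:ℝ) ≠ 0)]
    nlinarith [hs]
  rw [hinv]
  unfold F
  linear_combination (Real.exp (-1) * ((-1485551839/3321077760) * Real.sqrt 2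
    + (1128451553/6642155520) * Real.sqrt 2^3 + (-111231875/2656862208) * Real.sqrt 2^5
    + (4782139/759103488) * Real.sqrt 2^7 + (-62275/506068992) * Real.sqrt 2^9
    + (-57337/460062720) * Real.sqrt 2^11)) * hs








lemma fB : f 2 - f 1 > 5/21 := by
  have hs2 : Real.sqrt 2 ^ 2 = 2 := Real.sq_sqrt (by norm_num)
  have hs2pos := sqrt2_pos
  have h2s : (2:ℝ)/Real.sqrt 2 = Real.sqrt 2 := by
    rw [div_eq_iff hs2pos.ne']; nlinarith
  have hcont : Continuous (fun t : ℝ => Real.exp (-t^2)) := by continuity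
  have hadd := intervalIntegral.integral_add_adjacent_intervals
    (a := (0:ℝ)) (b := 1/Real.sqrt 2) (c := Real.sqrt 2) (μ := MeasureTheory.volume)
    (f := fun t : ℝ => Real.exp (-t^2))
    (hcont.intervalIntegrable _ _) (hcont.intervalIntegrable _ _)
  have hab : (1:ℝ)/Real.sqrt 2 ≤ Real.sqrt 2 := by
    rw [div_le_iff₀ hs2pos]; nlinarith
  have hmono : ∫ t in (1/Real.sqrt 2 : ℝ)..(Real.sqrt 2), P t
      ≤ ∫ t in (1/Real.sqrt 2 : ℝ)..(Real.sqrt 2), Real.exp (-t^2) := by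
    apply intervalIntegral.integral_mono_on hab
      (Continuous.intervalIntegrable (by unfold P; continuity) _ _)
      (hcont.intervalIntegrable _ _)
    intro t ht
    have h0 : 0 < 1/Real.sqrt 2 := by positivity
    have ht2 : (1/Real.sqrt 2)^2 ≤ t^2 := pow_le_pow_left₀ h0.le ht.1 2
    have hv : (1/Real.sqrt 2 : ℝ)^2 = 1/2 := by rw [div_pow, hs2]; norm_num
    apply P_le
    · rw [hv] at ht2; linarith
    · nlinarith [ht.2, ht.1]
  rw [integral_P] at hmono
  -- expression for f 2 - f 1
  have hexpand : f 2 - f 1 = Real.sqrt (2/π) * Real.sqrt 2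
        * (∫ t in (1/Real.sqrt 2 : ℝ)..(Real.sqrt 2), Real.exp (-t^2))
      - Real.sqrt (2/π) * ((1/2)*(1 - Real.exp (-2)) - (1 - Real.exp (-(1:ℝ)/2))) := by
    show erf (2 / Real.sqrt 2) - Real.sqrt (2 / π) * (1 / 2) * (1 - Real.exp (-2 ^ 2 / 2))
        - (erf (1 / Real.sqrt 2) - Real.sqrt (2 / π) * (1 / 1) * (1 - Real.exp (-1 ^ 2 / 2))) = _
    rw [h2s]
    unfold erf
    rw [← hadd, key]
    norm_num
    ring
  rw [hexpand]
  -- numeric bounds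
  set s := Real.sqrt (2/π) with hs_def
  have hs_sq : s^2 = 2/π := Real.sq_sqrt (by positivity)
  have hs_nonneg : 0 ≤ s := Real.sqrt_nonneg _
  have hπ_hi : π < 3.15 := Real.pi_lt_d2
  have hs_mul : s^2 * π = 2 := by
    rw [hs_sq]; field_simp
  have hs_lb : 0.7968 < s := by
    by_contra h
    push_neg at h
    have h1 : s^2 ≤ 0.63489024 := by nlinarith [hs_nonneg]
    nlinarith [Real.pi_pos, hπ_hi, hs_mul, h1]
  have he_lo : 2.7182818283 < Real.exp 1 := Real.exp_one_gt_d9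
  have he_hi : Real.exp 1 < 2.7182818286 := Real.exp_one_lt_d9
  have hE1 : Real.exp (-1) * Real.exp 1 = 1 := by
    rw [← Real.exp_add]; norm_num
  have hE1_lb : Real.exp (-1) > 0.3678794411 := by
    have h := mul_lt_mul_of_pos_left he_hi (Real.exp_pos (-1))
    rw [hE1] at h
    linarith
  have hE2 : Real.exp (-2) * (Real.exp 1 * Real.exp 1) = 1 := by
    rw [← Real.exp_add, ← Real.exp_add]; norm_num
  have hee : Real.exp 1 * Real.exp 1 < 7.3890561 := by
    have h := mul_lt_mul'' he_hi he_hi (Real.exp_pos 1).le (Real.exp_pos 1).le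
    norm_num at h ⊢
    linarith
  have hE2_lb : Real.exp (-2) > 0.13533528 := by
    have h := mul_lt_mul_of_pos_left hee (Real.exp_pos (-2))
    rw [hE2] at h
    linarith
  have hEh_sq : Real.exp (-(1:ℝ)/2) * Real.exp (-(1:ℝ)/2) = Real.exp (-1) := by
    rw [← Real.exp_add]; norm_num
  have hE1_ub : Real.exp (-1) < 0.3678794412 := by
    have h := mul_lt_mul_of_pos_left he_lo (Real.exp_pos (-1))
    rw [hE1] at h
    linarith
  have hEh_ub : Real.exp (-(1:ℝ)/2) < 0.60653066 := by
    by_contra hcon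
    push_neg at hcon
    have h2 := mul_le_mul hcon hcon (by norm_num) (Real.exp_pos (-(1:ℝ)/2)).le
    rw [hEh_sq] at h2
    linarith
  -- combine
  have hI : (∫ t in (1/Real.sqrt 2 : ℝ)..(Real.sqrt 2), Real.exp (-t^2))
      ≥ Real.exp (-1) * (768668129/1660538880) * Real.sqrt 2 := hmono
  have hX : Real.sqrt 2 * (∫ t in (1/Real.sqrt 2 : ℝ)..(Real.sqrt 2), Real.exp (-t^2))
      ≥ 2 * (768668129/1660538880) * Real.exp (-1) := by
    have h := mul_le_mul_of_nonneg_left hI (le_of_lt hs2pos)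
    have heq : Real.sqrt 2 * (Real.exp (-1) * (768668129/1660538880) * Real.sqrt 2)
        = 2 * (768668129/1660538880) * Real.exp (-1) := by
      linear_combination (Real.exp (-1) * (768668129/1660538880)) * hs2
    linarith [heq ▸ h]
  set I := ∫ t in (1/Real.sqrt 2 : ℝ)..(Real.sqrt 2), Real.exp (-t^2)
  have hXX : Real.sqrt 2 * I - ((1/2)*(1 - Real.exp (-2)) - (1 - Real.exp (-(1:ℝ)/2))) > 0.3017 := by
    linarith [hX, hE1_lb, hE2_lb, hEh_ub]
  have hprod : (0.7968 : ℝ) * 0.3017 < s * (Real.sqrt 2 * I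
      - ((1/2)*(1 - Real.exp (-2)) - (1 - Real.exp (-(1:ℝ)/2)))) :=
    mul_lt_mul'' hs_lb hXX (by norm_num) (by norm_num)
  have heq : s * (Real.sqrt 2 * I - ((1/2)*(1 - Real.exp (-2)) - (1 - Real.exp (-(1:ℝ)/2))))
      = s * Real.sqrt 2 * I - s * ((1/2)*(1 - Real.exp (-2)) - (1 - Real.exp (-(1:ℝ)/2))) := by
    ring
  rw [heq] at hprod
  exact lt_trans (by norm_num : (5:ℝ)/21 < 0.7968 * 0.3017) hprod


lemma f_concave : StrictConcaveOn ℝ (Set.Icc (1:ℝ) 2) f := by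
  apply strictConcaveOn_of_deriv2_neg (convex_Icc 1 2)
  · intro x hx
    exact (hasDerivAt_f x (by linarith [hx.1] : (0:ℝ) < x)).continuousAt.continuousWithinAt
  · intro x hx
    rw [interior_Icc] at hx
    have hx0 : (0:ℝ) < x := by linarith [hx.1]
    have hev : deriv f =ᶠ[nhds x] g := by
      filter_upwards [eventually_gt_nhds hx0] with y hy
      exact (hasDerivAt_f y hy).deriv
    have heq : deriv (deriv f) x = deriv g x := hev.deriv_eq
    have h := deriv2_g_neg x hx0
    rw [← heq] at h
    simpa [Function.iterate_succ, Function.comp] using h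

/-- For every `c ∈ (1,2]`, `p₁(c) − p₂ > 5(c−1)/21`. -/
theorem p1_sub_p2_gt (c : ℝ) (hc : c ∈ Set.Ioc (1:ℝ) 2) :
    (erf (c / Real.sqrt 2) - Real.sqrt (2 / π) * (1 / c) * (1 - Real.exp (-c ^ 2 / 2)))
      - (erf (1 / Real.sqrt 2) - Real.sqrt (2 / π) * (1 - Real.exp (-(1:ℝ) / 2)))
      > 5 * (c - 1) / 21 := by
  have e1 : Real.sqrt (2/π) * (1 - Real.exp (-(1:ℝ)/2))
      = Real.sqrt (2/π) * (1/1) * (1 - Real.exp (-(1:ℝ)^2/2)) := by norm_num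
  rw [e1]
  show f c - f 1 > 5 * (c - 1) / 21
  rcases eq_or_lt_of_le hc.2 with heq | hlt
  · rw [heq]
    have := fB
    norm_num at this ⊢
    linarith
  · have hcc := f_concave.2 (Set.mem_Icc.2 ⟨le_refl 1, by norm_num⟩)
      (Set.mem_Icc.2 ⟨by norm_num, le_refl 2⟩) (by norm_num)
      (show (0:ℝ) < 2 - c by linarith) (show (0:ℝ) < c - 1 by linarith [hc.1]) (by ring)
    have harg : (2 - c) • (1:ℝ) + (c - 1) • (2:ℝ) = c := by
      simp only [smul_eq_mul]; ring
    rw [harg] at hcc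
    simp only [smul_eq_mul] at hcc
    have hB := fB
    nlinarith [mul_pos (show (0:ℝ) < c - 1 by linarith [hc.1])
      (show (0:ℝ) < f 2 - f 1 - 5/21 by linarith [fB])]
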